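/- If p is prime, then the only translation-invariant set of bases of a rank-2 matroid on Z_p is the set of all 2-element subsets of Z_p (the uniform matroid U_{2,p}). -/

import Mathlib

/-- `B` is invariant under translation. -/
def TransInvariant (n : ℕ) (B : Set (Finset (ZMod n))) : Prop :=
  ∀ t : ZMod n, ∀ s ∈ B, s.image (fun x => t + x) ∈ B

/-- The (strong) matroid basis exchange axiom. -/
def ExchangeAxiom {α : Type*} [DecidableEq α] (B : Set (Finset α)) : Prop :=
  ∀ X ∈ B, ∀ Y ∈ B, ∀ x ∈ X, x ∉ Y → ∃ y ∈ Y, y ∉ X ∧ insert y (X.erase x) ∈ B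

/-- If `p` is prime, the only translation-invariant set of bases of a rank-2 matroid
on `Z_p` is the set of all 2-element subsets (the uniform matroid `U_{2,p}`). -/
theorem stmt_6 (p : ℕ) (hp : p.Prime) (B : Set (Finset (ZMod p)))
    (hcard : ∀ s ∈ B, s.card = 2) (hne : B.Nonempty)
    (hinv : TransInvariant p B) (hexch : ExchangeAxiom B) :
    B = {s : Finset (ZMod p) | s.card = 2} := by
  classical
  haveI : Fact p.Prime := ⟨hp⟩
  set D : Set (ZMod p) := {d | ({0, d} : Finset (ZMod p)) ∈ B} with hDdef
  -- pairs in B are exactly pairs whose difference is in D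
  have pairB : ∀ a b : ZMod p, ({a, b} : Finset (ZMod p)) ∈ B ↔ (b - a) ∈ D := by
    intro a b
    constructor
    · intro h
      have h2 := hinv (-a) _ h
      have himg : Finset.image (fun x => -a + x) ({a, b} : Finset (ZMod p))
          = {0, b - a} := by
        simp [Finset.image_insert, Finset.image_singleton, neg_add_eq_sub]
      rwa [himg] at h2
    · intro h
      have h2 := hinv a _ h
      have himg : Finset.image (fun x => a + x) ({0, b - a} : Finset (ZMod p))
          = {a, b} := by
        simp [Finset.image_insert, Finset.image_singleton]
      rwa [himg] at h2
  have h0 : (0 : ZMod p) ∉ D := by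
    intro h
    have := hcard _ h
    simp at this
  -- key exchange step
  have key : ∀ c : ZMod p, c ∉ D → c ≠ 0 → ∀ e ∈ D, c + e ∈ D := by
    intro c hc hc0 e he
    have he0 : e ≠ 0 := fun h => h0 (h ▸ he)
    have hX : ({0, e} : Finset (ZMod p)) ∈ B := he
    have hY : ({c, c + e} : Finset (ZMod p)) ∈ B := by
      rw [pairB]; simpa using he
    have hxX : e ∈ ({0, e} : Finset (ZMod p)) := by simp
    have hxY : e ∉ ({c, c + e} : Finset (ZMod p)) := by
      simp only [Finset.mem_insert, Finset.mem_singleton]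
      push_neg
      refine ⟨fun h => hc (h ▸ he), fun h => ?_⟩
      have : c = 0 := by rwa [right_eq_add] at h
      exact hc0 this
    obtain ⟨y, hyY, hyX, hB⟩ := hexch _ hX _ hY e hxX hxY
    have herase : ({0, e} : Finset (ZMod p)).erase e = {0} := by
      ext x
      simp only [Finset.mem_erase, Finset.mem_insert, Finset.mem_singleton]
      constructor
      · rintro ⟨hx, h | h⟩
        · exact h
        · exact absurd h hx
      · rintro rfl; exact ⟨fun h => he0 h.symm, Or.inl rfl⟩
    rw [herase] at hB
    have hyD : y ∈ D := by
      have : ({0, y} : Finset (ZMod p)) ∈ B := by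
        rwa [Finset.pair_comm] at hB
      simpa using (pairB 0 y).1 this
    rcases Finset.mem_insert.1 hyY with h | h
    · exact absurd (h ▸ hyD) hc
    · rw [Finset.mem_singleton] at h
      exact h ▸ hyD
  -- D contains all nonzero elements
  have hDall : ∀ z : ZMod p, z ≠ 0 → z ∈ D := by
    by_contra h
    push_neg at h
    obtain ⟨c, hc0, hc⟩ := h
    have hiter : ∀ n : ℕ, ∀ z ∈ D, (n : ZMod p) * c + z ∈ D := by
      intro n
      induction n with
      | zero => intro z hz; simpa using hz
      | succ k ih =>
        intro z hz
        have h1 := key c hc hc0 _ (ih z hz)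
        have h2 : ((k + 1 : ℕ) : ZMod p) * c + z = c + ((k : ZMod p) * c + z) := by
          push_cast; ring
        rw [h2]; exact h1
    -- get some element of D
    obtain ⟨s, hs⟩ := hne
    obtain ⟨a, b, hab, rfl⟩ := Finset.card_eq_two.1 (hcard _ hs)
    have he : b - a ∈ D := (pairB a b).1 hs
    set e := b - a with he'
    have hn := hiter ((-e) * c⁻¹).val e he
    have hval : ((((-e) * c⁻¹).val : ℕ) : ZMod p) = (-e) * c⁻¹ := by
      simp [ZMod.natCast_val, ZMod.cast_id]
    rw [hval] at hn
    have : (-e) * c⁻¹ * c + e = 0 := by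
      field_simp
      ring
    rw [this] at hn
    exact h0 hn
  -- conclude
  ext s
  simp only [Set.mem_setOf_eq]
  constructor
  · exact hcard s
  · intro hs
    obtain ⟨a, b, hab, rfl⟩ := Finset.card_eq_two.1 hs
    exact (pairB a b).2 (hDall _ (sub_ne_zero_of_ne hab.symm))
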